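/- Factoriality criterion: Let G = (V,E,r) be a graph. The monoid A(G) is factorial — that is, every nonzero a ∈ A(G) has a factorization into atoms that is unique up to a permutation of the summands: if a = b₁ + ⋯ + b_k = c₁ + ⋯ + c_l with all b_i and c_j atoms of A(G), then k = l and, after a permutation, b_i = c_i for all i — if and only if every connected component of G contains at most one edge; equivalently, if and only if no two distinct edges of G share an endpoint. -/

import Mathlib

/-- An agglomeration on the graph given by `r : E → Sym2 V`. -/
def IsAgg {V E : Type*} (r : E → Sym2 V) (a : (V → ℕ) × (E → ℕ)) : Prop :=
  ∀ (e : E) (v : V), v ∈ r e → a.2 e ≤ a.1 v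

/-- An atom of the monoid of agglomerations. -/
def IsAtomAgg {V E : Type*} (r : E → Sym2 V) (a : (V → ℕ) × (E → ℕ)) : Prop :=
  IsAgg r a ∧ a ≠ 0 ∧
    ∀ b c : (V → ℕ) × (E → ℕ), IsAgg r b → IsAgg r c → a = b + c → b = 0 ∨ c = 0

section Aux

variable {V E : Type*}

open Classical in
/-- The vertex atom. -/
noncomputable def dV (v : V) : (V → ℕ) × (E → ℕ) :=
  (fun u => if u = v then 1 else 0, 0)

open Classical in
/-- The edge atom. -/
noncomputable def aE (r : E → Sym2 V) (e : E) : (V → ℕ) × (E → ℕ) :=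
  (fun u => if u ∈ r e then 1 else 0, fun f => if f = e then 1 else 0)

variable {r : E → Sym2 V}

lemma prod_ext_zero {c : (V → ℕ) × (E → ℕ)} (h1 : c.1 = 0) (h2 : c.2 = 0) : c = 0 :=
  Prod.ext h1 h2

lemma fst_add_apply (b c : (V → ℕ) × (E → ℕ)) (v : V) :
    (b + c).1 v = b.1 v + c.1 v := rfl

lemma snd_add_apply (b c : (V → ℕ) × (E → ℕ)) (e : E) :
    (b + c).2 e = b.2 e + c.2 e := rfl

lemma isAgg_add {a b : (V → ℕ) × (E → ℕ)} (ha : IsAgg r a) (hb : IsAgg r b) :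
    IsAgg r (a + b) := fun e v hv => Nat.add_le_add (ha e v hv) (hb e v hv)

/-- If the vertex part vanishes, the whole agglomeration vanishes. -/
lemma eq_zero_of_fst_zero {c : (V → ℕ) × (E → ℕ)} (hc : IsAgg r c) (h1 : c.1 = 0) :
    c = 0 := by
  refine prod_ext_zero h1 ?_
  funext f
  have hm : (r f).out.1 ∈ r f := Sym2.out_fst_mem (r f)
  have := hc f _ hm
  rw [h1] at this
  simpa using this

lemma dV_ne_zero (v : V) : (dV v : (V → ℕ) × (E → ℕ)) ≠ 0 := by
  intro h
  have := congrFun (congrArg Prod.fst h) v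
  simp [dV] at this

lemma aE_ne_zero (e : E) : aE r e ≠ 0 := by
  intro h
  have := congrFun (congrArg Prod.snd h) e
  simp [aE] at this

lemma dV_inj {v w : V} (h : (dV v : (V → ℕ) × (E → ℕ)) = dV w) : v = w := by
  have := congrFun (congrArg Prod.fst h) v
  simp [dV] at this
  by_contra hne
  exact absurd this hne

lemma aE_ne_dV (e : E) (v : V) : aE r e ≠ dV v := by
  intro h
  have := congrFun (congrArg Prod.snd h) e
  simp [aE, dV] at this

lemma aE_inj {e f : E} (h : aE r e = aE r f) : e = f := by
  have := congrFun (congrArg Prod.snd h) e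
  simp [aE] at this
  by_contra hne
  exact absurd this hne

lemma isAgg_dV (v : V) : IsAgg r (dV v) := by
  intro e u _
  simp [dV]

lemma isAgg_aE (e : E) : IsAgg r (aE r e) := by
  intro f u hu
  by_cases hf : f = e
  · subst hf
    simp [aE, hu]
  · simp [aE, hf]

lemma atom_dV (v : V) : IsAtomAgg r (dV v) := by
  classical
  refine ⟨isAgg_dV v, dV_ne_zero v, ?_⟩
  have key : ∀ b c : (V → ℕ) × (E → ℕ), IsAgg r b → IsAgg r c →
      (dV v : (V → ℕ) × (E → ℕ)) = b + c → b.1 v = 0 → b = 0 := by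
    intro b c _ _ h hb
    have h1 : ∀ u, b.1 u + c.1 u = (dV v : (V → ℕ) × (E → ℕ)).1 u := fun u =>
      (congrFun (congrArg Prod.fst h) u).symm
    have h2 : ∀ f, b.2 f + c.2 f = (0 : ℕ) := by
      intro f
      have := (congrFun (congrArg Prod.snd h) f).symm
      simpa [dV] using this
    refine prod_ext_zero ?_ ?_
    · funext u
      by_cases hu : u = v
      · subst hu; exact hb
      · have := h1 u
        simp [dV, hu] at this
        exact this.1
    · funext f
      show b.2 f = 0
      have := h2 f
      omega
  intro b c hbg hcg h
  have h1 : b.1 v + c.1 v = 1 := by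
    have := (congrFun (congrArg Prod.fst h) v).symm
    simpa [dV] using this
  rcases Nat.eq_zero_or_pos (b.1 v) with hb | hb
  · exact Or.inl (key b c hbg hcg h hb)
  · have hc : c.1 v = 0 := by omega
    refine Or.inr (key c b hcg hbg ?_ hc)
    rw [h, add_comm]

lemma atom_aE (e : E) : IsAtomAgg r (aE r e) := by
  classical
  refine ⟨isAgg_aE e, aE_ne_zero e, ?_⟩
  have key : ∀ b c : (V → ℕ) × (E → ℕ), IsAgg r b → IsAgg r c →
      aE r e = b + c → c.2 e = 0 → c = 0 := by
    intro b c hbg hcg h hc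
    have h1 : ∀ u, b.1 u + c.1 u = (aE r e).1 u := fun u =>
      (congrFun (congrArg Prod.fst h) u).symm
    have h2 : ∀ f, b.2 f + c.2 f = (aE r e).2 f := fun f =>
      (congrFun (congrArg Prod.snd h) f).symm
    have hbe : b.2 e = 1 := by
      have := h2 e
      simp [aE] at this
      omega
    refine eq_zero_of_fst_zero hcg ?_
    funext u
    by_cases hu : u ∈ r e
    · show c.1 u = 0
      have hb1 : 1 ≤ b.1 u := hbe ▸ hbg e u hu
      have := h1 u
      simp [aE, hu] at this
      omega
    · show c.1 u = 0
      have := h1 u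
      simp [aE, hu] at this
      exact this.2
  intro b c hbg hcg h
  have h2 : b.2 e + c.2 e = 1 := by
    have := (congrFun (congrArg Prod.snd h) e).symm
    simpa [aE] using this
  rcases Nat.eq_zero_or_pos (c.2 e) with hc | hc
  · exact Or.inr (key b c hbg hcg h hc)
  · have hb : b.2 e = 0 := by omega
    refine Or.inl (key c b hcg hbg ?_ hb)
    rw [h, add_comm]

open Classical in
/-- The "double edge" atom for two edges sharing a vertex. -/
noncomputable def bB (r : E → Sym2 V) (e e' : E) : (V → ℕ) × (E → ℕ) :=
  (fun u => if u ∈ r e ∨ u ∈ r e' then 1 else 0, fun f => if f = e ∨ f = e' then 1 else 0)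

lemma atom_bB {e e' : E} (hee : e ≠ e') {v : V} (hv : v ∈ r e) (hv' : v ∈ r e') :
    IsAtomAgg r (bB r e e') := by
  classical
  have hagg : IsAgg r (bB r e e') := by
    intro f u hu
    by_cases hf : f = e ∨ f = e'
    · have hmem : u ∈ r e ∨ u ∈ r e' := by
        rcases hf with hf | hf <;> subst hf
        · exact Or.inl hu
        · exact Or.inr hu
      simp [bB, hf, hmem]
    · simp [bB, hf]
  have hne : bB r e e' ≠ 0 := by
    intro h
    have := congrFun (congrArg Prod.snd h) e
    simp [bB] at this
  refine ⟨hagg, hne, ?_⟩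
  have key : ∀ b c : (V → ℕ) × (E → ℕ), IsAgg r b → IsAgg r c →
      bB r e e' = b + c → c.2 e = 0 → c = 0 := by
    intro b c hbg hcg h hc
    have h1 : ∀ u, b.1 u + c.1 u = (bB r e e').1 u := fun u =>
      (congrFun (congrArg Prod.fst h) u).symm
    have h2 : ∀ f, b.2 f + c.2 f = (bB r e e').2 f := fun f =>
      (congrFun (congrArg Prod.snd h) f).symm
    have hbe : b.2 e = 1 := by
      have := h2 e
      simp [bB] at this
      omega
    have hbv : 1 ≤ b.1 v := hbe ▸ hbg e v hv
    have hcv : c.1 v = 0 := by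
      have := h1 v
      simp [bB, hv] at this
      omega
    have hce' : c.2 e' = 0 := by
      have := hcg e' v hv'
      omega
    have hbe' : b.2 e' = 1 := by
      have := h2 e'
      simp [bB] at this
      omega
    refine eq_zero_of_fst_zero hcg ?_
    funext u
    by_cases hu : u ∈ r e ∨ u ∈ r e'
    · have hb1 : 1 ≤ b.1 u := by
        rcases hu with hu | hu
        · exact hbe ▸ hbg e u hu
        · exact hbe' ▸ hbg e' u hu
      show c.1 u = 0
      have := h1 u
      simp [bB, hu] at this
      omega
    · show c.1 u = 0
      have := h1 u
      simp [bB, hu] at this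
      exact this.2
  intro b c hbg hcg h
  have h2 : b.2 e + c.2 e = 1 := by
    have := (congrFun (congrArg Prod.snd h) e).symm
    simpa [bB] using this
  rcases Nat.eq_zero_or_pos (c.2 e) with hc | hc
  · exact Or.inr (key b c hbg hcg h hc)
  · have hb : b.2 e = 0 := by omega
    refine Or.inl (key c b hcg hbg ?_ hb)
    rw [h, add_comm]

/-- Classification of atoms when no two distinct edges share a vertex. -/
lemma atom_classify (H : ∀ e e' : E, e ≠ e' → ∀ v : V, v ∈ r e → v ∉ r e')
    {a : (V → ℕ) × (E → ℕ)} (ha : IsAtomAgg r a) :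
    (∃ v, a = dV v) ∨ (∃ e, a = aE r e) := by
  classical
  obtain ⟨hagg, hne, hmin⟩ := ha
  by_cases h2 : a.2 = 0
  · -- find a vertex with nonzero value
    have h1 : a.1 ≠ 0 := by
      intro h1
      exact hne (prod_ext_zero h1 h2)
    obtain ⟨v, hv⟩ : ∃ v, a.1 v ≠ 0 := by
      by_contra hc
      push_neg at hc
      exact h1 (funext fun v => hc v)
    left
    refine ⟨v, ?_⟩
    set c : (V → ℕ) × (E → ℕ) := (fun u => a.1 u - (dV v : (V → ℕ) × (E → ℕ)).1 u, 0) with hc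
    have hcg : IsAgg r c := by intro f u _; simp [hc]
    have hsplit : a = dV v + c := by
      refine Prod.ext ?_ ?_
      · funext u
        show a.1 u = (dV v : (V → ℕ) × (E → ℕ)).1 u + c.1 u
        by_cases hu : u = v
        · subst hu; simp [dV, hc]; omega
        · simp [dV, hc, hu]
      · funext f
        show a.2 f = 0 + c.2 f
        simp [hc, h2, congrFun h2 f]
    rcases hmin (dV v) c (isAgg_dV v) hcg hsplit with h | h
    · exact absurd h (dV_ne_zero v)
    · rw [hsplit, h, add_zero]
  · obtain ⟨e, he⟩ : ∃ e, a.2 e ≠ 0 := by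
      by_contra hcon
      push_neg at hcon
      exact h2 (funext fun f => hcon f)
    right
    refine ⟨e, ?_⟩
    have hv1 : ∀ u, u ∈ r e → 1 ≤ a.1 u := fun u hu => le_trans (by omega) (hagg e u hu)
    set c : (V → ℕ) × (E → ℕ) :=
      (fun u => a.1 u - (aE r e).1 u, fun f => a.2 f - (aE r e).2 f) with hcdef
    have hcg : IsAgg r c := by
      intro f u hu
      by_cases hf : f = e
      · subst hf
        have h7 := hagg f u hu
        simp [hcdef, aE, hu]
        omega
      · have hnu : u ∉ r e := H f e hf u hu
        simp [hcdef, aE, hf, hnu]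
        exact hagg f u hu
    have hsplit : a = aE r e + c := by
      refine Prod.ext ?_ ?_
      · funext u
        show a.1 u = (aE r e).1 u + c.1 u
        by_cases hu : u ∈ r e
        · have := hv1 u hu
          simp [hcdef, aE, hu]
          omega
        · simp [hcdef, aE, hu]
      · funext f
        show a.2 f = (aE r e).2 f + c.2 f
        by_cases hf : f = e
        · subst hf
          simp [hcdef, aE]
          omega
        · simp [hcdef, aE, hf]
    rcases hmin (aE r e) c (isAgg_aE e) hcg hsplit with h | h
    · exact absurd h (aE_ne_zero e)
    · rw [hsplit, h, add_zero]

/-- Size of an agglomeration. -/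
noncomputable def Nsize [Fintype V] [Fintype E] (a : (V → ℕ) × (E → ℕ)) : ℕ :=
  (∑ v, a.1 v) + (∑ e, a.2 e)

lemma Nsize_add [Fintype V] [Fintype E] (a b : (V → ℕ) × (E → ℕ)) :
    Nsize (a + b) = Nsize a + Nsize b := by
  simp [Nsize, fst_add_apply, snd_add_apply, Finset.sum_add_distrib]
  ring

lemma Nsize_pos [Fintype V] [Fintype E] {a : (V → ℕ) × (E → ℕ)} (ha : a ≠ 0) :
    0 < Nsize a := by
  by_contra h
  push_neg at h
  have h0 : Nsize a = 0 := by omega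
  have hv : ∀ v, a.1 v = 0 := by
    intro v
    have h1 : ∑ v, a.1 v = 0 := by
      have := h0; unfold Nsize at this; omega
    exact Finset.sum_eq_zero_iff.mp h1 v (Finset.mem_univ v)
  have he : ∀ e, a.2 e = 0 := by
    intro e
    have h1 : ∑ e, a.2 e = 0 := by
      have := h0; unfold Nsize at this; omega
    exact Finset.sum_eq_zero_iff.mp h1 e (Finset.mem_univ e)
  exact ha (prod_ext_zero (funext hv) (funext he))

/-- Existence of atomic factorizations (holds for all graphs). -/
lemma exists_factorization [Fintype V] [Fintype E] (r : E → Sym2 V)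
    (a : (V → ℕ) × (E → ℕ)) (ha : IsAgg r a) (h0 : a ≠ 0) :
    ∃ (k : ℕ) (b : Fin k → (V → ℕ) × (E → ℕ)),
      (∀ i, IsAtomAgg r (b i)) ∧ a = ∑ i, b i := by
  classical
  have main : ∀ n (a : (V → ℕ) × (E → ℕ)), Nsize a ≤ n → IsAgg r a → a ≠ 0 →
      ∃ (k : ℕ) (b : Fin k → (V → ℕ) × (E → ℕ)),
        (∀ i, IsAtomAgg r (b i)) ∧ a = ∑ i, b i := by
    intro n
    induction n with
    | zero =>
      intro a hsz _ h0
      exact absurd hsz (by have := Nsize_pos h0; omega)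
    | succ n ih =>
      intro a hsz hagg h0
      by_cases hat : IsAtomAgg r a
      · exact ⟨1, fun _ => a, fun _ => hat, by simp⟩
      · have : ∃ b c : (V → ℕ) × (E → ℕ), IsAgg r b ∧ IsAgg r c ∧ a = b + c ∧
            b ≠ 0 ∧ c ≠ 0 := by
          unfold IsAtomAgg at hat
          push_neg at hat
          obtain ⟨b, c, hb, hc, habc, hbne, hcne⟩ := hat hagg h0
          exact ⟨b, c, hb, hc, habc, hbne, hcne⟩
        obtain ⟨b, c, hbg, hcg, habc, hbne, hcne⟩ := this
        have hsum : Nsize b + Nsize c ≤ n + 1 := by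
          rw [← Nsize_add, ← habc]; exact hsz
        have hbpos := Nsize_pos hbne
        have hcpos := Nsize_pos hcne
        obtain ⟨k1, b1, hb1, hs1⟩ := ih b (by omega) hbg hbne
        obtain ⟨k2, b2, hb2, hs2⟩ := ih c (by omega) hcg hcne
        refine ⟨k1 + k2, Fin.append b1 b2, ?_, ?_⟩
        · intro i
          refine Fin.addCases (fun j => ?_) (fun j => ?_) i
          · rw [Fin.append_left]; exact hb1 j
          · rw [Fin.append_right]; exact hb2 j
        · rw [Fin.sum_univ_add]
          simp only [Fin.append_left, Fin.append_right]
          rw [← hs1, ← hs2, habc]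
  exact main (Nsize a) a le_rfl ha h0

open Classical in
/-- From equal fiber cardinalities, build a matching equivalence. -/
lemma exists_equiv_of_card {α β γ : Type*} [Fintype α] [Fintype β]
    (f : α → γ) (g : β → γ)
    (h : ∀ x, (Finset.univ.filter fun i => f i = x).card
      = (Finset.univ.filter fun j => g j = x).card) :
    ∃ σ : α ≃ β, ∀ i, g (σ i) = f i := by
  classical
  have h' : ∀ x, Fintype.card {i // f i = x} = Fintype.card {j // g j = x} := by
    intro x
    rw [Fintype.card_subtype, Fintype.card_subtype]
    exact h x
  let Eq' : ∀ x, {i // f i = x} ≃ {j // g j = x} := fun x => Fintype.equivOfCardEq (h' x)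
  refine ⟨(Equiv.sigmaFiberEquiv f).symm.trans
    ((Equiv.sigmaCongrRight Eq').trans (Equiv.sigmaFiberEquiv g)), fun i => ?_⟩
  simp only [Equiv.trans_apply]
  have h1 : (Equiv.sigmaFiberEquiv f).symm i = ⟨f i, i, rfl⟩ := by
    apply (Equiv.sigmaFiberEquiv f).injective
    simp [Equiv.sigmaFiberEquiv]
  rw [h1]
  exact (Eq' (f i) ⟨i, rfl⟩).2

end Aux

/-- **Factoriality criterion**: `A(G)` is factorial (every nonzero element has a
factorization into atoms, unique up to permutation) if and only if no two distinct edges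
of `G` share an endpoint (equivalently, every connected component of `G` contains at most
one edge). -/
theorem factorial_iff {V E : Type*} [Fintype V] [Fintype E]
    (r : E → Sym2 V) (hr : ∀ e : E, ¬ (r e).IsDiag) :
    (∀ a : (V → ℕ) × (E → ℕ), IsAgg r a → a ≠ 0 →
      (∃ (k : ℕ) (b : Fin k → (V → ℕ) × (E → ℕ)),
        (∀ i, IsAtomAgg r (b i)) ∧ a = ∑ i, b i) ∧
      (∀ (k l : ℕ) (b : Fin k → (V → ℕ) × (E → ℕ)) (c : Fin l → (V → ℕ) × (E → ℕ)),
        (∀ i, IsAtomAgg r (b i)) → (∀ j, IsAtomAgg r (c j)) →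
        a = ∑ i, b i → a = ∑ j, c j →
        ∃ σ : Fin k ≃ Fin l, ∀ i, b i = c (σ i))) ↔
    (∀ e e' : E, e ≠ e' → ∀ v : V, v ∈ r e → v ∉ r e') := by
  classical
  constructor
  · -- factorial → no shared endpoints
    intro F
    by_contra hcon
    push_neg at hcon
    obtain ⟨e, e', hee, v, hv, hv'⟩ := hcon
    set a : (V → ℕ) × (E → ℕ) := aE r e + aE r e' with ha
    have haag : IsAgg r a := isAgg_add (isAgg_aE e) (isAgg_aE e')
    have hane : a ≠ 0 := by
      intro h
      have := congrFun (congrArg Prod.snd h) e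
      simp [ha, aE, snd_add_apply, hee] at this
    obtain ⟨-, uniq⟩ := F a haag hane
    have hbsum : a = ∑ i, (![aE r e, aE r e'] : Fin 2 → (V → ℕ) × (E → ℕ)) i := by
      rw [Fin.sum_univ_two]; simp [ha]
    have hbatom : ∀ i, IsAtomAgg r ((![aE r e, aE r e'] : Fin 2 → (V → ℕ) × (E → ℕ)) i) := by
      intro i
      fin_cases i
      · exact atom_aE e
      · exact atom_aE e'
    by_cases hre : r e = r e'
    · -- parallel edges: other factorization has 3 atoms
      obtain ⟨w, hw⟩ : ∃ w, s(v, w) = r e := ⟨Sym2.Mem.other hv, Sym2.other_spec hv⟩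
      have hvw : v ≠ w := by
        intro h
        apply hr e
        rw [← hw, ← h]
        exact Sym2.mk_isDiag_iff.mpr rfl
      have hmem : ∀ u, u ∈ r e ↔ u = v ∨ u = w := by
        intro u
        rw [← hw, Sym2.mem_iff]
      have hcsum : a = ∑ j, (![bB r e e', dV v, dV w] : Fin 3 → (V → ℕ) × (E → ℕ)) j := by
        rw [Fin.sum_univ_three]
        simp only [Matrix.cons_val_zero, Matrix.cons_val_one, Matrix.head_cons,
          Matrix.cons_val_two, Matrix.tail_cons]
        refine Prod.ext ?_ ?_
        · funext u
          show (aE r e).1 u + (aE r e').1 u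
            = (bB r e e').1 u + (dV v : (V → ℕ) × (E → ℕ)).1 u
              + (dV w : (V → ℕ) × (E → ℕ)).1 u
          have hmm : u ∈ r e ↔ u = v ∨ u = w := hmem u
          have he'' : u ∈ r e' ↔ u = v ∨ u = w := by rw [← hre]; exact hmm
          simp only [aE, bB, dV, hmm, he'', or_self]
          by_cases h1 : u = v
          · by_cases h2 : u = w
            · exact absurd (h1 ▸ h2) hvw
            · simp [h1, h2, hvw, Ne.symm hvw]
          · by_cases h2 : u = w
            · simp [h1, h2, hvw, Ne.symm hvw]
            · simp [h1, h2]
        · funext f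
          show (aE r e).2 f + (aE r e').2 f
            = (bB r e e').2 f + 0 + 0
          simp only [aE, bB]
          by_cases h1 : f = e
          · by_cases h2 : f = e'
            · exact absurd (h1 ▸ h2 : e = e') hee
            · simp [h1, h2, hee, Ne.symm hee]
          · by_cases h2 : f = e'
            · simp [h1, h2, hee, Ne.symm hee]
            · simp [h1, h2]
      have hcatom : ∀ j, IsAtomAgg r ((![bB r e e', dV v, dV w] : Fin 3 → _) j) := by
        intro j
        fin_cases j
        · exact atom_bB hee hv hv'
        · exact atom_dV v
        · exact atom_dV w
      obtain ⟨σ, -⟩ := uniq 2 3 _ _ hbatom hcatom hbsum hcsum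
      have := Fintype.card_congr σ
      simp at this
    · -- non-parallel edges sharing exactly v
      have hshared : ∀ u, u ∈ r e → u ∈ r e' → u = v := by
        intro u hu hu'
        by_contra hne
        apply hre
        rw [(Sym2.mem_and_mem_iff hne).mp ⟨hu, hv⟩,
          (Sym2.mem_and_mem_iff hne).mp ⟨hu', hv'⟩]
      have hcsum : a = ∑ j, (![bB r e e', dV v] : Fin 2 → (V → ℕ) × (E → ℕ)) j := by
        rw [Fin.sum_univ_two]
        simp only [Matrix.cons_val_zero, Matrix.cons_val_one, Matrix.head_cons]
        refine Prod.ext ?_ ?_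
        · funext u
          show (aE r e).1 u + (aE r e').1 u
            = (bB r e e').1 u + (dV v : (V → ℕ) × (E → ℕ)).1 u
          simp only [aE, bB, dV]
          by_cases h3 : u = v
          · subst h3; simp [hv, hv']
          · by_cases h1 : u ∈ r e
            · have h2 : u ∉ r e' := fun h => h3 (hshared u h1 h)
              simp [h1, h2, h3]
            · by_cases h2 : u ∈ r e'
              · simp [h1, h2, h3]
              · simp [h1, h2, h3]
        · funext f
          show (aE r e).2 f + (aE r e').2 f = (bB r e e').2 f + 0
          simp only [aE, bB]
          by_cases h1 : f = e
          · by_cases h2 : f = e'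
            · exact absurd (h1 ▸ h2 : e = e') hee
            · simp [h1, h2, hee, Ne.symm hee]
          · by_cases h2 : f = e'
            · simp [h1, h2, hee, Ne.symm hee]
            · simp [h1, h2]
      have hcatom : ∀ j, IsAtomAgg r ((![bB r e e', dV v] : Fin 2 → _) j) := by
        intro j
        fin_cases j
        · exact atom_bB hee hv hv'
        · exact atom_dV v
      obtain ⟨σ, hσ⟩ := uniq 2 2 _ _ hbatom hcatom hbsum hcsum
      have h0 := hσ 0
      simp only [Matrix.cons_val_zero] at h0
      have : (![bB r e e', dV v] : Fin 2 → (V → ℕ) × (E → ℕ)) (σ 0) = bB r e e'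
          ∨ (![bB r e e', dV v] : Fin 2 → (V → ℕ) × (E → ℕ)) (σ 0) = dV v := by
        have htc : ∀ j : Fin 2, (![bB r e e', dV v] : Fin 2 → (V → ℕ) × (E → ℕ)) j = bB r e e'
            ∨ (![bB r e e', dV v] : Fin 2 → (V → ℕ) × (E → ℕ)) j = dV v := by
          intro j
          fin_cases j
          · exact Or.inl rfl
          · exact Or.inr rfl
        exact htc (σ 0)
      rcases this with h | h
      · rw [h] at h0
        have := congrFun (congrArg Prod.snd h0) e'
        simp [aE, bB, Ne.symm hee] at this
      · rw [h] at h0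
        have := congrFun (congrArg Prod.snd h0) e
        simp [aE, dV] at this
  · -- no shared endpoints → factorial
    intro H a hagg h0
    refine ⟨exists_factorization r a hagg h0, ?_⟩
    intro k l b c hb hc hsb hsc
    -- counting lemmas
    have count_e : ∀ (m : ℕ) (d : Fin m → (V → ℕ) × (E → ℕ)),
        (∀ i, IsAtomAgg r (d i)) → a = ∑ i, d i → ∀ e : E,
        (Finset.univ.filter fun i => d i = aE r e).card = a.2 e := by
      intro m d hd hsd e
      have h1 : a.2 e = ∑ i, (d i).2 e := by
        rw [hsd, Prod.snd_sum, Finset.sum_apply]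
      rw [Finset.card_filter]
      rw [h1]
      refine Finset.sum_congr rfl fun i _ => ?_
      rcases atom_classify H (hd i) with ⟨v, hv⟩ | ⟨f, hf⟩
      · rw [hv, if_neg (fun h => aE_ne_dV e v h.symm)]
        rfl
      · by_cases hfe : f = e
        · subst hfe; rw [hf, if_pos rfl]; simp [aE]
        · rw [hf, if_neg (fun h => hfe (aE_inj h))]
          simp [aE, Ne.symm hfe]
    have count_v : ∀ (m : ℕ) (d : Fin m → (V → ℕ) × (E → ℕ)),
        (∀ i, IsAtomAgg r (d i)) → a = ∑ i, d i → ∀ v : V,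
        (Finset.univ.filter fun i => d i = dV v).card
          + (∑ e, if v ∈ r e then a.2 e else 0) = a.1 v := by
      intro m d hd hsd v
      have h1 : a.1 v = ∑ i, (d i).1 v := by
        rw [hsd, Prod.fst_sum, Finset.sum_apply]
      have h2 : ∀ e : E, a.2 e = ∑ i, (d i).2 e := by
        intro e; rw [hsd, Prod.snd_sum, Finset.sum_apply]
      have key : ∀ i, (d i).1 v
          = (if d i = dV v then 1 else 0) + ∑ e, if v ∈ r e then (d i).2 e else 0 := by
        intro i
        rcases atom_classify H (hd i) with ⟨w, hw⟩ | ⟨f, hf⟩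
        · rw [hw]
          have hsum0 : (∑ e, if v ∈ r e then (dV w : (V → ℕ) × (E → ℕ)).2 e else 0) = 0 := by
            apply Finset.sum_eq_zero
            intro e _
            simp [dV]
          rw [hsum0, add_zero]
          by_cases hwv : w = v
          · subst hwv; rw [if_pos rfl]; simp [dV]
          · rw [if_neg (fun h => hwv (dV_inj h))]
            have hvw' : v ≠ w := fun h => hwv h.symm
            simp [dV, hvw']
        · rw [hf]
          have h3 : aE r f ≠ dV v := aE_ne_dV f v
          rw [if_neg h3, zero_add]
          have h4 : (∑ e, if v ∈ r e then (aE r f).2 e else 0)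
              = ∑ e, if e = f then (if v ∈ r e then 1 else 0) else 0 := by
            refine Finset.sum_congr rfl fun e _ => ?_
            simp only [aE]
            by_cases h5 : e = f <;> by_cases h6 : v ∈ r e <;> simp [h5, h6]
          rw [h4, Finset.sum_ite_eq' Finset.univ f (fun e => if v ∈ r e then 1 else 0)]
          simp [aE]
      rw [h1]
      symm
      calc ∑ i, (d i).1 v
          = ∑ i, ((if d i = dV v then 1 else 0)
              + ∑ e, if v ∈ r e then (d i).2 e else 0) := Finset.sum_congr rfl fun i _ => key i
        _ = (∑ i, if d i = dV v then 1 else 0)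
              + ∑ i, ∑ e, if v ∈ r e then (d i).2 e else 0 := Finset.sum_add_distrib
        _ = (Finset.univ.filter fun i => d i = dV v).card
              + ∑ e, ∑ i, if v ∈ r e then (d i).2 e else 0 := by
            rw [← Finset.card_filter, Finset.sum_comm]
        _ = (Finset.univ.filter fun i => d i = dV v).card
              + ∑ e, if v ∈ r e then a.2 e else 0 := by
            congr 1
            refine Finset.sum_congr rfl fun e _ => ?_
            by_cases h6 : v ∈ r e
            · simp only [h6, if_true]
              exact (h2 e).symm
            · simp [h6]
      -- done
    have hcard : ∀ x : (V → ℕ) × (E → ℕ),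
        (Finset.univ.filter fun i => b i = x).card
          = (Finset.univ.filter fun j => c j = x).card := by
      intro x
      by_cases hx : (∃ i, b i = x) ∨ (∃ j, c j = x)
      · have hform : (∃ v, x = dV v) ∨ (∃ e, x = aE r e) := by
          rcases hx with ⟨i, hi⟩ | ⟨j, hj⟩
          · exact hi ▸ atom_classify H (hb i)
          · exact hj ▸ atom_classify H (hc j)
        rcases hform with ⟨v, hv⟩ | ⟨e, he⟩
        · subst hv
          have h1 := count_v k b hb hsb v
          have h2 := count_v l c hc hsc v
          omega
        · subst he
          rw [count_e k b hb hsb e, count_e l c hc hsc e]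
      · push_neg at hx
        obtain ⟨hx1, hx2⟩ := hx
        have hz1 : (Finset.univ.filter fun i => b i = x).card = 0 := by
          rw [Finset.card_eq_zero]
          exact Finset.filter_eq_empty_iff.mpr (fun {i} _ => hx1 i)
        have hz2 : (Finset.univ.filter fun j => c j = x).card = 0 := by
          rw [Finset.card_eq_zero]
          exact Finset.filter_eq_empty_iff.mpr (fun {j} _ => hx2 j)
        omega
    obtain ⟨σ, hσ⟩ := exists_equiv_of_card b c (fun x => by
      have hx := hcard x
      convert hx using 3)
    exact ⟨σ, fun i => (hσ i).symm⟩
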